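/- Let μ > 0 and let e, σ, γ be as defined. For every T > 0 there is a constant C > 0 such that for all t, s with 0 < |s| < t ≤ T, writing p = (t+s)/2 and l = (t−s)/2, the following four bounds hold: (i) | e(t/2)/(e(p) + e(l)) − 1/2 | ≤ C·s²; (ii) | p·l/(e(p)·e(l)) − t²/(4·e(t/2)²) | ≤ C·s²; (iii) | σ(p)·σ(l)·√(e(p)·e(l)) − σ(t/2)²·e(t/2) | ≤ C·s²; (iv) | γ(p)·γ(l)·√(e(p)·e(l)) − γ(t/2)²·e(t/2) | ≤ C·s². -/

import Mathlib

open Real Filter Asymptotics Topology MeasureTheory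

/-- Bogoliubov dispersion relation (contact interaction). -/
noncomputable def disp (μ k : ℝ) : ℝ := Real.sqrt (k^4/4 + μ*k^2)

/-- Bogoliubov coefficient σ. -/
noncomputable def sig (μ k : ℝ) : ℝ :=
  Real.sqrt ((Real.sqrt ((disp μ k)^2 + μ^2) + disp μ k) / (2 * disp μ k))

/-- Bogoliubov coefficient γ. -/
noncomputable def gam (μ k : ℝ) : ℝ :=
  Real.sqrt ((Real.sqrt ((disp μ k)^2 + μ^2) - disp μ k) / (2 * disp μ k))

lemma disp_nonneg (μ k : ℝ) : 0 ≤ disp μ k := Real.sqrt_nonneg _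

lemma disp_sq {μ : ℝ} (hμ : 0 ≤ μ) (k : ℝ) : (disp μ k)^2 = k^4/4 + μ*k^2 :=
  Real.sq_sqrt (by nlinarith [sq_nonneg k, sq_nonneg (k^2)])

lemma disp_pos {μ k : ℝ} (hμ : 0 < μ) (hk : 0 < k) : 0 < disp μ k :=
  Real.sqrt_pos.2 (by nlinarith [pow_pos hk 4, mul_pos hμ (pow_pos hk 2)])

lemma disp_eq {μ : ℝ} (hμ : 0 ≤ μ) {k : ℝ} (hk : 0 ≤ k) :
    disp μ k = k * Real.sqrt (μ + k^2/4) := by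
  unfold disp
  rw [show k^4/4 + μ*k^2 = k^2 * (μ + k^2/4) by ring,
    Real.sqrt_mul (sq_nonneg k), Real.sqrt_sq hk]

lemma sqrt_disp_sq_add {μ : ℝ} (hμ : 0 < μ) (k : ℝ) :
    Real.sqrt ((disp μ k)^2 + μ^2) = k^2/2 + μ := by
  rw [disp_sq hμ.le, show k^4/4 + μ*k^2 + μ^2 = (k^2/2 + μ)^2 by ring]
  exact Real.sqrt_sq (by nlinarith [sq_nonneg k])

lemma disp_le_u {μ : ℝ} (hμ : 0 < μ) (k : ℝ) : disp μ k ≤ k^2/2 + μ := by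
  nlinarith [disp_sq hμ.le k, disp_nonneg μ k, sq_nonneg k]

lemma sig_sqrt {μ k : ℝ} (hμ : 0 < μ) (hk : 0 < k) :
    sig μ k = Real.sqrt (((k^2/2 + μ + disp μ k)/2) / disp μ k) := by
  unfold sig
  rw [sqrt_disp_sq_add hμ]
  rw [div_div]

lemma gam_sqrt {μ k : ℝ} (hμ : 0 < μ) (hk : 0 < k) :
    gam μ k = Real.sqrt (((k^2/2 + μ - disp μ k)/2) / disp μ k) := by
  unfold gam
  rw [sqrt_disp_sq_add hμ]
  rw [div_div]

lemma sig_sq_mul {μ k : ℝ} (hμ : 0 < μ) (hk : 0 < k) :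
    (sig μ k)^2 * disp μ k = (k^2/2 + μ + disp μ k)/2 := by
  rw [sig_sqrt hμ hk, Real.sq_sqrt, div_mul_cancel₀ _ (disp_pos hμ hk).ne']
  have := disp_nonneg μ k
  positivity

lemma gam_sq_mul {μ k : ℝ} (hμ : 0 < μ) (hk : 0 < k) :
    (gam μ k)^2 * disp μ k = (k^2/2 + μ - disp μ k)/2 := by
  rw [gam_sqrt hμ hk, Real.sq_sqrt, div_mul_cancel₀ _ (disp_pos hμ hk).ne']
  have h1 := disp_le_u hμ k
  have h2 := disp_pos hμ hk
  have h3 : 0 ≤ (k^2/2 + μ - disp μ k)/2 := by linarith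
  positivity

lemma abs_le_div_of_abs_mul_le {x y M d : ℝ} (hd : 0 < d) (hy : d ≤ y)
    (h : |x * y| ≤ M) : |x| ≤ M / d := by
  rw [le_div_iff₀ hd]
  calc |x| * d ≤ |x| * y := mul_le_mul_of_nonneg_left hy (abs_nonneg x)
    _ = |x * y| := by rw [abs_mul, abs_of_nonneg (hd.le.trans hy)]
    _ ≤ M := h

lemma abs_sqrt_mul_sub_le {x y z δ M : ℝ} (hδ : 0 < δ) (hx : δ ≤ x) (hy : δ ≤ y)
    (hz : δ ≤ z) (hM : |x*y - z^2| ≤ M) : |Real.sqrt (x*y) - z| ≤ M/(2*δ) := by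
  have hxy : (0:ℝ) ≤ x * y := mul_nonneg (hδ.le.trans hx) (hδ.le.trans hy)
  have hs : δ ≤ Real.sqrt (x*y) := by
    rw [show δ = Real.sqrt (δ^2) from (Real.sqrt_sq hδ.le).symm]
    exact Real.sqrt_le_sqrt (by linarith [mul_le_mul hx hy hδ.le (hδ.le.trans hx)])
  have hsum : 2*δ ≤ Real.sqrt (x*y) + z := by linarith
  refine abs_le_div_of_abs_mul_le (by linarith) hsum ?_
  have h2 : (Real.sqrt (x*y) - z) * (Real.sqrt (x*y) + z) = x*y - z^2 := by
    have h3 := Real.sq_sqrt hxy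
    linear_combination h3
  rw [h2]; exact hM

lemma sqrt_combine {X Y u v : ℝ} (hu : 0 < u) (hv : 0 < v) (hX : 0 ≤ X) (hY : 0 ≤ Y) :
    Real.sqrt (X/u) * Real.sqrt (Y/v) * Real.sqrt (u*v) = Real.sqrt (X*Y) := by
  rw [← Real.sqrt_mul (by positivity), ← Real.sqrt_mul (by positivity)]
  congr 1
  field_simp

set_option maxHeartbeats 2000000 in
theorem stmt18 (μ : ℝ) (hμ : 0 < μ) (T : ℝ) (hT : 0 < T) :
    ∃ C > 0, ∀ t s : ℝ, 0 < |s| → |s| < t → t ≤ T →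
      |disp μ (t/2) / (disp μ ((t+s)/2) + disp μ ((t-s)/2)) - 1/2| ≤ C * s^2 ∧
      |((t+s)/2) * ((t-s)/2) / (disp μ ((t+s)/2) * disp μ ((t-s)/2))
          - t^2 / (4 * (disp μ (t/2))^2)| ≤ C * s^2 ∧
      |sig μ ((t+s)/2) * sig μ ((t-s)/2)
            * Real.sqrt (disp μ ((t+s)/2) * disp μ ((t-s)/2))
          - (sig μ (t/2))^2 * disp μ (t/2)| ≤ C * s^2 ∧
      |gam μ ((t+s)/2) * gam μ ((t-s)/2)
            * Real.sqrt (disp μ ((t+s)/2) * disp μ ((t-s)/2))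
          - (gam μ (t/2))^2 * disp μ (t/2)| ≤ C * s^2 := by
  obtain ⟨sμ, hsμdef⟩ : ∃ x, x = Real.sqrt μ := ⟨_, rfl⟩
  have hsμ : 0 < sμ := by rw [hsμdef]; exact Real.sqrt_pos.2 hμ
  have hsμ2 : sμ * sμ = μ := by rw [hsμdef]; exact Real.mul_self_sqrt hμ.le
  obtain ⟨Q, hQdef⟩ : ∃ x, x = μ + T^2/4 := ⟨_, rfl⟩
  have hQpos : 0 < Q := by rw [hQdef]; linarith [sq_nonneg T]
  obtain ⟨sQ, hsQdef⟩ : ∃ x, x = Real.sqrt Q := ⟨_, rfl⟩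
  have hsQ : 0 < sQ := by rw [hsQdef]; exact Real.sqrt_pos.2 hQpos
  obtain ⟨P, hPdef⟩ : ∃ x, x = μ/2 + T^2/8 := ⟨_, rfl⟩
  have hP : 0 < P := by rw [hPdef]; linarith [sq_nonneg T]
  obtain ⟨K1, hK1def⟩ : ∃ x, x = (P/μ + 1/2)/(4*sμ) := ⟨_, rfl⟩
  have hK1 : 0 < K1 := by
    rw [hK1def]
    exact div_pos (by have := div_pos hP hμ; linarith) (by linarith)
  obtain ⟨KS, hKSdef⟩ : ∃ x, x = 1/(2*sμ) + K1 := ⟨_, rfl⟩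
  have hKS : 0 < KS := by
    rw [hKSdef]
    have : (0:ℝ) < 1/(2*sμ) := by positivity
    linarith
  obtain ⟨LD, hLDdef⟩ : ∃ x, x = sQ + 3*T^2/(32*sμ) := ⟨_, rfl⟩
  have hLD : 0 < LD := by
    rw [hLDdef]
    have : (0:ℝ) ≤ 3*T^2/(32*sμ) := div_nonneg (by positivity) (by linarith)
    linarith
  obtain ⟨Z, hZdef⟩ : ∃ x, x = (T^2/2 + μ + T*sQ)/2 := ⟨_, rfl⟩
  have hZ : 0 < Z := by
    rw [hZdef]
    linarith [mul_pos hT hsQ, sq_nonneg T]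
  obtain ⟨L2, hL2def⟩ : ∃ x, x = 3*T/4 + LD/2 := ⟨_, rfl⟩
  have hL2 : 0 < L2 := by rw [hL2def]; linarith
  obtain ⟨K2, hK2def⟩ : ∃ x, x = (1 + KS*(T/2))/2 := ⟨_, rfl⟩
  have hK2 : 0 < K2 := by
    rw [hK2def]
    have := mul_pos hKS (show (0:ℝ) < T/2 by linarith)
    linarith
  obtain ⟨M3, hM3def⟩ : ∃ x, x = L2^2 + Z*K2 := ⟨_, rfl⟩
  have hM3 : 0 < M3 := by
    rw [hM3def]
    have := pow_pos hL2 2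
    have := mul_pos hZ hK2
    linarith
  obtain ⟨δB, hδBdef⟩ : ∃ x, x = μ^2/(4*Z) := ⟨_, rfl⟩
  have hδB : 0 < δB := by rw [hδBdef]; exact div_pos (by positivity) (by linarith)
  obtain ⟨C, hCdef⟩ : ∃ x, x = KS/(16*sμ) + P/(8*μ^3) + M3/(4*μ) + M3/(8*δB) := ⟨_, rfl⟩
  have hC1 : 0 < KS/(16*sμ) := div_pos hKS (by linarith)
  have hC2 : 0 < P/(8*μ^3) := div_pos hP (by positivity)
  have hC3 : 0 < M3/(4*μ) := div_pos hM3 (by linarith)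
  have hC4 : 0 < M3/(8*δB) := div_pos hM3 (by linarith)
  have hCpos : 0 < C := by rw [hCdef]; linarith
  have hCa : KS/(16*sμ) ≤ C := by rw [hCdef]; linarith
  have hCb : P/(8*μ^3) ≤ C := by rw [hCdef]; linarith
  have hCc : M3/(4*μ) ≤ C := by rw [hCdef]; linarith
  have hCd : M3/(8*δB) ≤ C := by rw [hCdef]; linarith
  refine ⟨C, hCpos, ?_⟩
  intro t s hs0 hst htT
  obtain ⟨m, rfl⟩ : ∃ m, t = 2*m := ⟨t/2, by ring⟩
  obtain ⟨d, rfl⟩ : ∃ d, s = 2*d := ⟨s/2, by ring⟩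
  have habs2 : |(2:ℝ)*d| = 2*|d| := by rw [abs_mul, abs_two]
  rw [habs2] at hs0 hst
  have hd0 : 0 < |d| := by linarith
  have hdm : |d| < m := by linarith
  have hm0 : 0 < m := lt_trans hd0 hdm
  have hmT : m ≤ T/2 := by linarith
  obtain ⟨hdm1, hdm2⟩ := abs_lt.1 hdm
  have hp0 : 0 < m + d := by linarith
  have hl0 : 0 < m - d := by linarith
  have hpT : m + d ≤ T := by linarith
  have hlT : m - d ≤ T := by linarith
  have hmT' : m ≤ T := by linarith
  -- rewrite the goal
  rw [show (2*m+2*d)/2 = m + d from by ring, show (2*m-2*d)/2 = m - d from by ring,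
    show 2*m/2 = m from by ring,
    disp_eq hμ.le hp0.le, disp_eq hμ.le hl0.le, disp_eq hμ.le hm0.le]
  obtain ⟨a, hadef⟩ : ∃ x, Real.sqrt (μ + (m+d)^2/4) = x := ⟨_, rfl⟩
  obtain ⟨b, hbdef⟩ : ∃ x, Real.sqrt (μ + (m-d)^2/4) = x := ⟨_, rfl⟩
  obtain ⟨c, hcdef⟩ : ∃ x, Real.sqrt (μ + m^2/4) = x := ⟨_, rfl⟩
  rw [hadef, hbdef, hcdef]
  have ha2 : a^2 = μ + (m+d)^2/4 := by
    rw [← hadef]; exact Real.sq_sqrt (by linarith [sq_nonneg (m+d)])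
  have hb2 : b^2 = μ + (m-d)^2/4 := by
    rw [← hbdef]; exact Real.sq_sqrt (by linarith [sq_nonneg (m-d)])
  have hc2 : c^2 = μ + m^2/4 := by
    rw [← hcdef]; exact Real.sq_sqrt (by linarith [sq_nonneg m])
  have haμ : sμ ≤ a := by
    rw [hsμdef, ← hadef]; exact Real.sqrt_le_sqrt (by linarith [sq_nonneg (m+d)])
  have hbμ : sμ ≤ b := by
    rw [hsμdef, ← hbdef]; exact Real.sqrt_le_sqrt (by linarith [sq_nonneg (m-d)])
  have hcμ : sμ ≤ c := by
    rw [hsμdef, ← hcdef]; exact Real.sqrt_le_sqrt (by linarith [sq_nonneg m])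
  have ha0 : 0 < a := lt_of_lt_of_le hsμ haμ
  have hb0 : 0 < b := lt_of_lt_of_le hsμ hbμ
  have hc0 : 0 < c := lt_of_lt_of_le hsμ hcμ
  have haQ : a ≤ sQ := by
    rw [hsQdef, ← hadef, hQdef]; exact Real.sqrt_le_sqrt (by linarith [pow_le_pow_left₀ hp0.le hpT 2])
  have hbQ : b ≤ sQ := by
    rw [hsQdef, ← hbdef, hQdef]; exact Real.sqrt_le_sqrt (by linarith [pow_le_pow_left₀ hl0.le hlT 2])
  have hcQ : c ≤ sQ := by
    rw [hsQdef, ← hcdef, hQdef]; exact Real.sqrt_le_sqrt (by linarith [pow_le_pow_left₀ hm0.le hmT' 2])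
  have hdd : d^2 ≤ m*|d| := by linarith [abs_mul_abs_self d, mul_le_mul_of_nonneg_right hdm.le (abs_nonneg d)]
  have hd2m : d^2 ≤ m^2 := by linarith [hdd, mul_le_mul_of_nonneg_left hdm.le hm0.le]
  have hm2T : m^2 ≤ T^2/4 := by linarith [pow_le_pow_left₀ (by linarith : (0:ℝ) ≤ 2*m) (by linarith : 2*m ≤ T) 2]
  -- |a - b|
  have kab : (a-b)*(a+b) = m*d := by linear_combination ha2 - hb2
  have hab_d : |a-b| ≤ m*|d|/(2*sμ) := by
    refine abs_le_div_of_abs_mul_le (show (0:ℝ) < 2*sμ by linarith)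
      (show 2*sμ ≤ a+b by linarith) ?_
    rw [kab, abs_mul, abs_of_nonneg hm0.le]
  -- |a*b - c^2|
  have hab_lb : μ ≤ a*b := by
    linarith [mul_le_mul haμ hbμ hsμ.le ha0.le, hsμ2]
  have hPb : |μ/2 - m^2/8 + d^2/16| ≤ P := by
    rw [hPdef, abs_le]; constructor <;> linarith [hd2m, hm2T, sq_nonneg d, sq_nonneg m, sq_nonneg T]
  have kabc : (a*b - c^2)*(a*b + c^2) = d^2*(μ/2 - m^2/8 + d^2/16) := by
    have hab2 : (a*b)^2 = (μ+(m+d)^2/4)*(μ+(m-d)^2/4) := by rw [mul_pow, ha2, hb2]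
    linear_combination hab2 - (c^2 + (μ + m^2/4))*hc2
  have habs : |a*b - c^2| ≤ d^2*P/(2*μ) := by
    refine abs_le_div_of_abs_mul_le (show (0:ℝ) < 2*μ by linarith)
      (show 2*μ ≤ a*b + c^2 by linarith [hab_lb, hc2, sq_nonneg m]) ?_
    rw [kabc, abs_mul, abs_of_nonneg (sq_nonneg d)]
    exact mul_le_mul_of_nonneg_left hPb (sq_nonneg d)
  -- |a + b - 2c|
  have kabc2 : (a+b-2*c)*(a+b+2*c) = 2*(a*b-c^2) + d^2/2 := by
    linear_combination ha2 + hb2 - 2*hc2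
  have habc2 : |a+b-2*c| ≤ (2*(d^2*P/(2*μ)) + d^2/2)/(4*sμ) := by
    refine abs_le_div_of_abs_mul_le (show (0:ℝ) < 4*sμ by linarith)
      (show 4*sμ ≤ a+b+2*c by linarith) ?_
    rw [kabc2]
    calc |2*(a*b-c^2) + d^2/2| ≤ |2*(a*b-c^2)| + |d^2/2| := abs_add_le _ _
      _ = 2*|a*b-c^2| + d^2/2 := by
          rw [abs_mul, abs_two, abs_of_nonneg (by positivity : (0:ℝ) ≤ d^2/2)]
      _ ≤ 2*(d^2*P/(2*μ)) + d^2/2 := by linarith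
  have habc2' : |a+b-2*c| ≤ d^2*K1 := by
    refine habc2.trans (le_of_eq ?_)
    rw [hK1def]
    field_simp
  -- second difference of disp
  have hS : |(m+d)*a + (m-d)*b - 2*(m*c)| ≤ m*d^2*KS := by
    have hid : (m+d)*a + (m-d)*b - 2*(m*c) = d*(a-b) + m*(a+b-2*c) := by ring
    rw [hid]
    calc |d*(a-b) + m*(a+b-2*c)| ≤ |d| * |a-b| + m * |a+b-2*c| := by
          refine (abs_add_le _ _).trans ?_
          rw [abs_mul, abs_mul, abs_of_nonneg hm0.le]
      _ ≤ |d| * (m*|d|/(2*sμ)) + m * (d^2*K1) :=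
          add_le_add (mul_le_mul_of_nonneg_left hab_d (abs_nonneg d))
            (mul_le_mul_of_nonneg_left habc2' hm0.le)
      _ = m * (|d| * |d|)/(2*sμ) + m * (d^2*K1) := by ring
      _ = m*d^2*KS := by rw [abs_mul_abs_self, hKSdef]; ring
  -- first differences
  have kac : (a-c)*(a+c) = (2*m*d + d^2)/4 := by linear_combination ha2 - hc2
  have kbc : (b-c)*(b+c) = (-(2*m*d) + d^2)/4 := by linear_combination hb2 - hc2
  have h2md : |2*m*d + d^2| ≤ 3*(m*|d|) := by
    calc |2*m*d + d^2| ≤ |2*m*d| + |d^2| := abs_add_le _ _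
      _ = 2*m*|d| + d^2 := by
          rw [abs_mul, abs_of_nonneg (by linarith : (0:ℝ) ≤ 2*m), abs_of_nonneg (sq_nonneg d)]
      _ ≤ 3*(m*|d|) := by linarith
  have h2md' : |-(2*m*d) + d^2| ≤ 3*(m*|d|) := by
    calc |-(2*m*d) + d^2| ≤ |-(2*m*d)| + |d^2| := abs_add_le _ _
      _ = 2*m*|d| + d^2 := by
          rw [abs_neg, abs_mul, abs_of_nonneg (by linarith : (0:ℝ) ≤ 2*m),
            abs_of_nonneg (sq_nonneg d)]
      _ ≤ 3*(m*|d|) := by linarith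
  have hac : |a-c| ≤ 3*(m*|d|)/4/(2*sμ) := by
    refine abs_le_div_of_abs_mul_le (show (0:ℝ) < 2*sμ by linarith)
      (show 2*sμ ≤ a+c by linarith) ?_
    rw [kac, abs_div, (show |(4:ℝ)| = 4 from abs_of_nonneg (by norm_num))]
    exact (div_le_div_iff_of_pos_right (by norm_num)).2 h2md
  have hbc : |b-c| ≤ 3*(m*|d|)/4/(2*sμ) := by
    refine abs_le_div_of_abs_mul_le (show (0:ℝ) < 2*sμ by linarith)
      (show 2*sμ ≤ b+c by linarith) ?_
    rw [kbc, abs_div, (show |(4:ℝ)| = 4 from abs_of_nonneg (by norm_num))]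
    exact (div_le_div_iff_of_pos_right (by norm_num)).2 h2md'
  have hstepm : 3*m^2*|d|/(8*sμ) ≤ 3*T^2*|d|/(32*sμ) := by
    rw [div_le_div_iff₀ (by linarith) (by linarith)]
    have h1 : m^2*|d| ≤ (T^2/4)*|d| := mul_le_mul_of_nonneg_right hm2T (abs_nonneg d)
    linarith [mul_le_mul_of_nonneg_right h1 (show (0:ℝ) ≤ 96*sμ by linarith)]
  have hEpm : |(m+d)*a - m*c| ≤ |d| * LD := by
    rw [show (m+d)*a - m*c = d*a + m*(a-c) from by ring]
    calc |d*a + m*(a-c)| ≤ |d| * a + m * |a-c| := by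
          refine (abs_add_le _ _).trans ?_
          rw [abs_mul, abs_mul, abs_of_nonneg ha0.le, abs_of_nonneg hm0.le]
      _ ≤ |d| * sQ + m * (3*(m*|d|)/4/(2*sμ)) :=
          add_le_add (mul_le_mul_of_nonneg_left haQ (abs_nonneg d))
            (mul_le_mul_of_nonneg_left hac hm0.le)
      _ = |d| * sQ + 3*m^2*|d|/(8*sμ) := by ring
      _ ≤ |d| * sQ + 3*T^2*|d|/(32*sμ) := by linarith [hstepm]
      _ = |d| * LD := by rw [hLDdef]; ring
  have hElm : |(m-d)*b - m*c| ≤ |d| * LD := by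
    rw [show (m-d)*b - m*c = -(d*b) + m*(b-c) from by ring]
    calc |(-(d*b)) + m*(b-c)| ≤ |d| * b + m * |b-c| := by
          refine (abs_add_le _ _).trans ?_
          rw [abs_neg, abs_mul, abs_mul, abs_of_nonneg hb0.le, abs_of_nonneg hm0.le]
      _ ≤ |d| * sQ + m * (3*(m*|d|)/4/(2*sμ)) :=
          add_le_add (mul_le_mul_of_nonneg_left hbQ (abs_nonneg d))
            (mul_le_mul_of_nonneg_left hbc hm0.le)
      _ = |d| * sQ + 3*m^2*|d|/(8*sμ) := by ring
      _ ≤ |d| * sQ + 3*T^2*|d|/(32*sμ) := by linarith [hstepm]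
      _ = |d| * LD := by rw [hLDdef]; ring
  -- basic products
  have hEp0 : 0 < (m+d)*a := mul_pos hp0 ha0
  have hEl0 : 0 < (m-d)*b := mul_pos hl0 hb0
  have hEm0 : 0 < m*c := mul_pos hm0 hc0
  have hEp_ub : (m+d)*a ≤ T*sQ := mul_le_mul hpT haQ ha0.le hT.le
  have hEl_ub : (m-d)*b ≤ T*sQ := mul_le_mul hlT hbQ hb0.le hT.le
  have hEm_ub : m*c ≤ T*sQ := mul_le_mul hmT' hcQ hc0.le hT.le
  have habs4 : |(4:ℝ)| = 4 := abs_of_nonneg (by norm_num)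
  have habs2' : |(2:ℝ)| = 2 := abs_of_nonneg (by norm_num)
  -- A bounds
  have hAPlb : μ/2 ≤ ((m+d)^2/2 + μ + (m+d)*a)/2 := by linarith [sq_nonneg (m+d), hEp0]
  have hALlb : μ/2 ≤ ((m-d)^2/2 + μ + (m-d)*b)/2 := by linarith [sq_nonneg (m-d), hEl0]
  have hAMlb : μ/2 ≤ (m^2/2 + μ + m*c)/2 := by linarith [sq_nonneg m, hEm0]
  have hAPub : ((m+d)^2/2 + μ + (m+d)*a)/2 ≤ Z := by
    rw [hZdef]; linarith [hEp_ub, pow_le_pow_left₀ hp0.le hpT 2]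
  have hALub : ((m-d)^2/2 + μ + (m-d)*b)/2 ≤ Z := by
    rw [hZdef]; linarith [hEl_ub, pow_le_pow_left₀ hl0.le hlT 2]
  have hAMub : (m^2/2 + μ + m*c)/2 ≤ Z := by
    rw [hZdef]; linarith [hEm_ub, pow_le_pow_left₀ hm0.le hmT' 2]
  have hAPm : |((m+d)^2/2 + μ + (m+d)*a)/2 - (m^2/2 + μ + m*c)/2| ≤ |d| * L2 := by
    rw [show ((m+d)^2/2 + μ + (m+d)*a)/2 - (m^2/2 + μ + m*c)/2 = (2*m*d+d^2)/4 + ((m+d)*a - m*c)/2 from by ring]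
    calc |(2*m*d+d^2)/4 + ((m+d)*a - m*c)/2|
        ≤ |(2*m*d+d^2)/4| + |((m+d)*a - m*c)/2| := abs_add_le _ _
      _ = |2*m*d+d^2|/4 + |(m+d)*a - m*c|/2 := by rw [abs_div, abs_div, habs4, habs2']
      _ ≤ 3*(m*|d|)/4 + (|d| *LD)/2 := by
          have h1 := (div_le_div_iff_of_pos_right (show (0:ℝ) < 4 by norm_num)).2 h2md
          have h2 := (div_le_div_iff_of_pos_right (show (0:ℝ) < 2 by norm_num)).2 hEpm
          linarith
      _ ≤ |d| * L2 := by
          rw [hL2def]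
          have h3 : m*|d| ≤ T*|d| := mul_le_mul_of_nonneg_right hmT' (abs_nonneg d)
          linarith
  have hALm : |((m-d)^2/2 + μ + (m-d)*b)/2 - (m^2/2 + μ + m*c)/2| ≤ |d| * L2 := by
    rw [show ((m-d)^2/2 + μ + (m-d)*b)/2 - (m^2/2 + μ + m*c)/2 = (-(2*m*d)+d^2)/4 + ((m-d)*b - m*c)/2 from by ring]
    calc |(-(2*m*d)+d^2)/4 + ((m-d)*b - m*c)/2|
        ≤ |(-(2*m*d)+d^2)/4| + |((m-d)*b - m*c)/2| := abs_add_le _ _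
      _ = |(-(2*m*d))+d^2|/4 + |(m-d)*b - m*c|/2 := by rw [abs_div, abs_div, habs4, habs2']
      _ ≤ 3*(m*|d|)/4 + (|d| *LD)/2 := by
          have h1 := (div_le_div_iff_of_pos_right (show (0:ℝ) < 4 by norm_num)).2 h2md'
          have h2 := (div_le_div_iff_of_pos_right (show (0:ℝ) < 2 by norm_num)).2 hElm
          linarith
      _ ≤ |d| * L2 := by
          rw [hL2def]
          have h3 : m*|d| ≤ T*|d| := mul_le_mul_of_nonneg_right hmT' (abs_nonneg d)
          linarith
  have hAsum : |((m+d)^2/2 + μ + (m+d)*a)/2 + ((m-d)^2/2 + μ + (m-d)*b)/2 - 2*((m^2/2 + μ + m*c)/2)| ≤ d^2 * K2 := by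
    rw [show ((m+d)^2/2 + μ + (m+d)*a)/2 + ((m-d)^2/2 + μ + (m-d)*b)/2 - 2*((m^2/2 + μ + m*c)/2)
        = (d^2 + ((m+d)*a + (m-d)*b - 2*(m*c)))/2 from by ring]
    calc |(d^2 + ((m+d)*a + (m-d)*b - 2*(m*c)))/2|
        = |d^2 + ((m+d)*a + (m-d)*b - 2*(m*c))|/2 := by rw [abs_div, habs2']
      _ ≤ (d^2 + m*d^2*KS)/2 := by
          refine (div_le_div_iff_of_pos_right (show (0:ℝ) < 2 by norm_num)).2 ?_
          refine (abs_add_le _ _).trans ?_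
          rw [abs_of_nonneg (sq_nonneg d)]
          linarith [hS]
      _ ≤ d^2 * K2 := by
          rw [hK2def]
          have h3 : m*(d^2*KS) ≤ (T/2)*(d^2*KS) :=
            mul_le_mul_of_nonneg_right hmT (mul_nonneg (sq_nonneg d) hKS.le)
          linarith
  have hAM0 : (0:ℝ) ≤ (m^2/2 + μ + m*c)/2 := by linarith
  have hprodA : |(((m+d)^2/2 + μ + (m+d)*a)/2) * (((m-d)^2/2 + μ + (m-d)*b)/2) - ((m^2/2 + μ + m*c)/2)^2| ≤ d^2 * M3 := by
    rw [show (((m+d)^2/2 + μ + (m+d)*a)/2) * (((m-d)^2/2 + μ + (m-d)*b)/2) - ((m^2/2 + μ + m*c)/2)^2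
        = ((((m+d)^2/2 + μ + (m+d)*a)/2) - ((m^2/2 + μ + m*c)/2))*((((m-d)^2/2 + μ + (m-d)*b)/2) - ((m^2/2 + μ + m*c)/2))
          + ((m^2/2 + μ + m*c)/2)*((((m+d)^2/2 + μ + (m+d)*a)/2) + (((m-d)^2/2 + μ + (m-d)*b)/2) - 2*((m^2/2 + μ + m*c)/2)) from by ring]
    calc _ ≤ |((((m+d)^2/2 + μ + (m+d)*a)/2) - ((m^2/2 + μ + m*c)/2))*((((m-d)^2/2 + μ + (m-d)*b)/2) - ((m^2/2 + μ + m*c)/2))|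
            + |((m^2/2 + μ + m*c)/2)*((((m+d)^2/2 + μ + (m+d)*a)/2) + (((m-d)^2/2 + μ + (m-d)*b)/2) - 2*((m^2/2 + μ + m*c)/2))| := abs_add_le _ _
      _ = |(((m+d)^2/2 + μ + (m+d)*a)/2) - ((m^2/2 + μ + m*c)/2)| * |(((m-d)^2/2 + μ + (m-d)*b)/2) - ((m^2/2 + μ + m*c)/2)|
            + ((m^2/2 + μ + m*c)/2) * |(((m+d)^2/2 + μ + (m+d)*a)/2) + (((m-d)^2/2 + μ + (m-d)*b)/2) - 2*((m^2/2 + μ + m*c)/2)| := by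
          rw [abs_mul, abs_mul, abs_of_nonneg hAM0]
      _ ≤ (|d| *L2)*(|d| *L2) + Z*(d^2*K2) :=
          add_le_add (mul_le_mul hAPm hALm (abs_nonneg _)
              (mul_nonneg (abs_nonneg d) hL2.le))
            (mul_le_mul hAMub hAsum (abs_nonneg _) hZ.le)
      _ = d^2 * M3 := by
          rw [hM3def, ← sq_abs d]; ring
  -- B bounds
  have hBPeq : (((m+d)^2/2 + μ + (m+d)*a)/2) * (((m+d)^2/2 + μ - (m+d)*a)/2) = μ^2/4 := by
    linear_combination (-(m+d)^2/4)*ha2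
  have hBLeq : (((m-d)^2/2 + μ + (m-d)*b)/2) * (((m-d)^2/2 + μ - (m-d)*b)/2) = μ^2/4 := by
    linear_combination (-(m-d)^2/4)*hb2
  have hBMeq : ((m^2/2 + μ + m*c)/2) * ((m^2/2 + μ - m*c)/2) = μ^2/4 := by
    linear_combination (-m^2/4)*hc2
  have hAP0 : (0:ℝ) < ((m+d)^2/2 + μ + (m+d)*a)/2 := by linarith
  have hAL0 : (0:ℝ) < ((m-d)^2/2 + μ + (m-d)*b)/2 := by linarith
  have hAM0' : (0:ℝ) < (m^2/2 + μ + m*c)/2 := by linarith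
  have hBP0 : (0:ℝ) < ((m+d)^2/2 + μ - (m+d)*a)/2 := by
    rcases mul_pos_iff.1 (show (0:ℝ) < (((m+d)^2/2 + μ + (m+d)*a)/2) * (((m+d)^2/2 + μ - (m+d)*a)/2) by rw [hBPeq]; positivity) with h|h
    · exact h.2
    · linarith [h.1]
  have hBL0 : (0:ℝ) < ((m-d)^2/2 + μ - (m-d)*b)/2 := by
    rcases mul_pos_iff.1 (show (0:ℝ) < (((m-d)^2/2 + μ + (m-d)*b)/2) * (((m-d)^2/2 + μ - (m-d)*b)/2) by rw [hBLeq]; positivity) with h|h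
    · exact h.2
    · linarith [h.1]
  have hBM0 : (0:ℝ) < (m^2/2 + μ - m*c)/2 := by
    rcases mul_pos_iff.1 (show (0:ℝ) < ((m^2/2 + μ + m*c)/2) * ((m^2/2 + μ - m*c)/2) by rw [hBMeq]; positivity) with h|h
    · exact h.2
    · linarith [h.1]
  have hBPlb : δB ≤ ((m+d)^2/2 + μ - (m+d)*a)/2 := by
    rw [hδBdef, div_le_iff₀ (by linarith : (0:ℝ) < 4*Z)]
    have h1 : (((m+d)^2/2 + μ + (m+d)*a)/2) * (((m+d)^2/2 + μ - (m+d)*a)/2) ≤ Z * (((m+d)^2/2 + μ - (m+d)*a)/2) :=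
      mul_le_mul_of_nonneg_right hAPub hBP0.le
    linarith [hBPeq]
  have hBLlb : δB ≤ ((m-d)^2/2 + μ - (m-d)*b)/2 := by
    rw [hδBdef, div_le_iff₀ (by linarith : (0:ℝ) < 4*Z)]
    have h1 : (((m-d)^2/2 + μ + (m-d)*b)/2) * (((m-d)^2/2 + μ - (m-d)*b)/2) ≤ Z * (((m-d)^2/2 + μ - (m-d)*b)/2) :=
      mul_le_mul_of_nonneg_right hALub hBL0.le
    linarith [hBLeq]
  have hBMlb : δB ≤ (m^2/2 + μ - m*c)/2 := by
    rw [hδBdef, div_le_iff₀ (by linarith : (0:ℝ) < 4*Z)]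
    have h1 : ((m^2/2 + μ + m*c)/2) * ((m^2/2 + μ - m*c)/2) ≤ Z * ((m^2/2 + μ - m*c)/2) :=
      mul_le_mul_of_nonneg_right hAMub hBM0.le
    linarith [hBMeq]
  have hBMub : (m^2/2 + μ - m*c)/2 ≤ Z := by
    rw [hZdef]; linarith [hEm0, hm2T, mul_pos hT hsQ]
  have hBPm : |((m+d)^2/2 + μ - (m+d)*a)/2 - (m^2/2 + μ - m*c)/2| ≤ |d| * L2 := by
    rw [show ((m+d)^2/2 + μ - (m+d)*a)/2 - (m^2/2 + μ - m*c)/2 = (2*m*d+d^2)/4 + (m*c - (m+d)*a)/2 from by ring]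
    calc |(2*m*d+d^2)/4 + (m*c - (m+d)*a)/2|
        ≤ |(2*m*d+d^2)/4| + |(m*c - (m+d)*a)/2| := abs_add_le _ _
      _ = |2*m*d+d^2|/4 + |(m+d)*a - m*c|/2 := by
          rw [abs_div, abs_div, habs4, habs2', abs_sub_comm (m*c)]
      _ ≤ 3*(m*|d|)/4 + (|d| *LD)/2 := by
          have h1 := (div_le_div_iff_of_pos_right (show (0:ℝ) < 4 by norm_num)).2 h2md
          have h2 := (div_le_div_iff_of_pos_right (show (0:ℝ) < 2 by norm_num)).2 hEpm
          linarith
      _ ≤ |d| * L2 := by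
          rw [hL2def]
          have h3 : m*|d| ≤ T*|d| := mul_le_mul_of_nonneg_right hmT' (abs_nonneg d)
          linarith
  have hBLm : |((m-d)^2/2 + μ - (m-d)*b)/2 - (m^2/2 + μ - m*c)/2| ≤ |d| * L2 := by
    rw [show ((m-d)^2/2 + μ - (m-d)*b)/2 - (m^2/2 + μ - m*c)/2 = (-(2*m*d)+d^2)/4 + (m*c - (m-d)*b)/2 from by ring]
    calc |(-(2*m*d)+d^2)/4 + (m*c - (m-d)*b)/2|
        ≤ |(-(2*m*d)+d^2)/4| + |(m*c - (m-d)*b)/2| := abs_add_le _ _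
      _ = |(-(2*m*d))+d^2|/4 + |(m-d)*b - m*c|/2 := by
          rw [abs_div, abs_div, habs4, habs2', abs_sub_comm (m*c)]
      _ ≤ 3*(m*|d|)/4 + (|d| *LD)/2 := by
          have h1 := (div_le_div_iff_of_pos_right (show (0:ℝ) < 4 by norm_num)).2 h2md'
          have h2 := (div_le_div_iff_of_pos_right (show (0:ℝ) < 2 by norm_num)).2 hElm
          linarith
      _ ≤ |d| * L2 := by
          rw [hL2def]
          have h3 : m*|d| ≤ T*|d| := mul_le_mul_of_nonneg_right hmT' (abs_nonneg d)
          linarith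
  have hBsum : |((m+d)^2/2 + μ - (m+d)*a)/2 + ((m-d)^2/2 + μ - (m-d)*b)/2 - 2*((m^2/2 + μ - m*c)/2)| ≤ d^2 * K2 := by
    rw [show ((m+d)^2/2 + μ - (m+d)*a)/2 + ((m-d)^2/2 + μ - (m-d)*b)/2 - 2*((m^2/2 + μ - m*c)/2)
        = (d^2 + (2*(m*c) - ((m+d)*a + (m-d)*b)))/2 from by ring]
    calc |(d^2 + (2*(m*c) - ((m+d)*a + (m-d)*b)))/2|
        = |d^2 + (2*(m*c) - ((m+d)*a + (m-d)*b))|/2 := by rw [abs_div, habs2']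
      _ ≤ (d^2 + m*d^2*KS)/2 := by
          refine (div_le_div_iff_of_pos_right (show (0:ℝ) < 2 by norm_num)).2 ?_
          refine (abs_add_le _ _).trans ?_
          rw [abs_of_nonneg (sq_nonneg d), abs_sub_comm (2*(m*c))]
          linarith [hS]
      _ ≤ d^2 * K2 := by
          rw [hK2def]
          have h3 : m*(d^2*KS) ≤ (T/2)*(d^2*KS) :=
            mul_le_mul_of_nonneg_right hmT (mul_nonneg (sq_nonneg d) hKS.le)
          linarith
  have hprodB : |(((m+d)^2/2 + μ - (m+d)*a)/2) * (((m-d)^2/2 + μ - (m-d)*b)/2) - ((m^2/2 + μ - m*c)/2)^2| ≤ d^2 * M3 := by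
    rw [show (((m+d)^2/2 + μ - (m+d)*a)/2) * (((m-d)^2/2 + μ - (m-d)*b)/2) - ((m^2/2 + μ - m*c)/2)^2
        = ((((m+d)^2/2 + μ - (m+d)*a)/2) - ((m^2/2 + μ - m*c)/2))*((((m-d)^2/2 + μ - (m-d)*b)/2) - ((m^2/2 + μ - m*c)/2))
          + ((m^2/2 + μ - m*c)/2)*((((m+d)^2/2 + μ - (m+d)*a)/2) + (((m-d)^2/2 + μ - (m-d)*b)/2) - 2*((m^2/2 + μ - m*c)/2)) from by ring]
    calc _ ≤ |((((m+d)^2/2 + μ - (m+d)*a)/2) - ((m^2/2 + μ - m*c)/2))*((((m-d)^2/2 + μ - (m-d)*b)/2) - ((m^2/2 + μ - m*c)/2))|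
            + |((m^2/2 + μ - m*c)/2)*((((m+d)^2/2 + μ - (m+d)*a)/2) + (((m-d)^2/2 + μ - (m-d)*b)/2) - 2*((m^2/2 + μ - m*c)/2))| := abs_add_le _ _
      _ = |(((m+d)^2/2 + μ - (m+d)*a)/2) - ((m^2/2 + μ - m*c)/2)| * |(((m-d)^2/2 + μ - (m-d)*b)/2) - ((m^2/2 + μ - m*c)/2)|
            + ((m^2/2 + μ - m*c)/2) * |(((m+d)^2/2 + μ - (m+d)*a)/2) + (((m-d)^2/2 + μ - (m-d)*b)/2) - 2*((m^2/2 + μ - m*c)/2)| := by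
          rw [abs_mul, abs_mul, abs_of_nonneg hBM0.le]
      _ ≤ (|d| *L2)*(|d| *L2) + Z*(d^2*K2) :=
          add_le_add (mul_le_mul hBPm hBLm (abs_nonneg _)
              (mul_nonneg (abs_nonneg d) hL2.le))
            (mul_le_mul hBMub hBsum (abs_nonneg _) hZ.le)
      _ = d^2 * M3 := by
          rw [hM3def, ← sq_abs d]; ring
  refine ⟨?_, ?_, ?_, ?_⟩
  · -- part (i)
    have hden : 2*m*sμ ≤ (m+d)*a + (m-d)*b := by
      linarith [mul_le_mul_of_nonneg_left haμ hp0.le, mul_le_mul_of_nonneg_left hbμ hl0.le]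
    have hdenpos : 0 < (m+d)*a + (m-d)*b := by linarith [mul_pos hm0 hsμ]
    have hrw : m*c/((m+d)*a + (m-d)*b) - 1/2
        = -(((m+d)*a + (m-d)*b - 2*(m*c))/(2*((m+d)*a + (m-d)*b))) := by
      field_simp
      ring
    rw [hrw, abs_neg, abs_div, abs_of_nonneg (by linarith : (0:ℝ) ≤ 2*((m+d)*a + (m-d)*b))]
    refine le_trans (div_le_div₀ (mul_nonneg (mul_nonneg hm0.le (sq_nonneg d)) hKS.le)
      hS (by linarith [mul_pos hm0 hsμ] : (0:ℝ) < 2*(2*m*sμ)) (by linarith)) ?_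
    have he1 : m*d^2*KS/(2*(2*m*sμ)) = 4*d^2*(KS/(16*sμ)) := by
      field_simp
      ring
    rw [he1]
    exact (mul_le_mul_of_nonneg_left hCa (by positivity)).trans (le_of_eq (by ring))
  · -- part (ii)
    have hr1 : (m+d)*(m-d) / ((m+d)*a * ((m-d)*b)) = 1/(a*b) := by
      field_simp
    have hr2 : (2*m)^2/(4*(m*c)^2) = 1/c^2 := by
      field_simp
      ring
    rw [hr1, hr2]
    have hr3 : 1/(a*b) - 1/c^2 = -((a*b - c^2)/((a*b)*c^2)) := by
      field_simp
      ring
    have habc20 : (0:ℝ) < (a*b)*c^2 := by positivity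
    rw [hr3, abs_neg, abs_div, abs_of_nonneg habc20.le]
    have hd2 : μ*μ ≤ (a*b)*c^2 :=
      mul_le_mul hab_lb (by linarith [hc2, sq_nonneg m]) hμ.le (by linarith [hab_lb])
    refine le_trans (div_le_div₀
      (div_nonneg (mul_nonneg (sq_nonneg d) hP.le) (by linarith))
      habs (by positivity : (0:ℝ) < μ*μ) hd2) ?_
    have he2 : (d^2*P/(2*μ))/(μ*μ) = 4*d^2*(P/(8*μ^3)) := by
      field_simp
      ring
    rw [he2]
    exact (mul_le_mul_of_nonneg_left hCb (by positivity)).trans (le_of_eq (by ring))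
  · -- part (iii)
    have hsp := sig_sqrt hμ hp0
    rw [disp_eq hμ.le hp0.le, hadef] at hsp
    have hsl := sig_sqrt hμ hl0
    rw [disp_eq hμ.le hl0.le, hbdef] at hsl
    have hsm := sig_sq_mul hμ hm0
    rw [disp_eq hμ.le hm0.le, hcdef] at hsm
    rw [hsp, hsl, hsm,
      sqrt_combine hEp0 hEl0 (by linarith : (0:ℝ) ≤ ((m+d)^2/2 + μ + (m+d)*a)/2) (by linarith : (0:ℝ) ≤ ((m-d)^2/2 + μ + (m-d)*b)/2)]
    refine le_trans (abs_sqrt_mul_sub_le (show (0:ℝ) < μ/2 by linarith)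
      hAPlb hALlb hAMlb hprodA) ?_
    have he3 : d^2*M3/(2*(μ/2)) = 4*d^2*(M3/(4*μ)) := by
      ring
    rw [he3]
    exact (mul_le_mul_of_nonneg_left hCc (by positivity)).trans (le_of_eq (by ring))
  · -- part (iv)
    have hsp := gam_sqrt hμ hp0
    rw [disp_eq hμ.le hp0.le, hadef] at hsp
    have hsl := gam_sqrt hμ hl0
    rw [disp_eq hμ.le hl0.le, hbdef] at hsl
    have hsm := gam_sq_mul hμ hm0
    rw [disp_eq hμ.le hm0.le, hcdef] at hsm
    rw [hsp, hsl, hsm,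
      sqrt_combine hEp0 hEl0 hBP0.le hBL0.le]
    refine le_trans (abs_sqrt_mul_sub_le hδB hBPlb hBLlb hBMlb hprodB) ?_
    have he4 : d^2*M3/(2*δB) = 4*d^2*(M3/(8*δB)) := by
      field_simp
      ring
    rw [he4]
    exact (mul_le_mul_of_nonneg_left hCd (by positivity)).trans (le_of_eq (by ring))
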